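/- Let X and Y be topological spaces, and let f : X → X, g : Y → Y, α : X → Y, β : Y → X be continuous maps satisfying α ∘ f = g ∘ α and β ∘ g = f ∘ β. Assume there is a continuous homotopy K : X × [0,1] → X with K(x,0) = x and K(x,1) = β(α(x)) for all x, satisfying K(f x, t) = f(K(x,t)) for all x and t, and similarly a continuous homotopy K' : Y × [0,1] → Y with K'(y,0) = y and K'(y,1) = α(β(y)) for all y, satisfying K'(g y, t) = g(K'(y,t)) for all y and t. Then α maps Fix(f) into Fix(g), it preserves the fixed point class relation (if x, x' ∈ Fix(f) lie in the same fixed point class of f, then α(x), α(x') lie in the same fixed point class of g), and the induced map Fix^c(f) → Fix^c(g), [x] ↦ [α(x)], is a bijection. -/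
import Mathlib


/-- The fixed point class relation on the fixed points of `f`: two fixed points `a` and `b`
are related iff there is a path `p` from `a` to `b` with `p` homotopic (rel endpoints)
to `f ∘ p`. -/
def FixRel {X : Type*} [TopologicalSpace X] (f : C(X, X))
    (a b : {x : X // f x = x}) : Prop :=
  ∃ p : Path a.1 b.1,
    Path.Homotopic p ((p.map f.continuous).cast a.2.symm b.2.symm)

/-- A continuous equivariant map preserves the fixed point class relation. -/
lemma FixRel.map_aux {X Y : Type*} [TopologicalSpace X] [TopologicalSpace Y]
    (f : C(X, X)) (g : C(Y, Y)) (α : C(X, Y)) (hα : ∀ x, α (f x) = g (α x))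
    {x x' : X} (hx : f x = x) (hx' : f x' = x')
    (h : FixRel f ⟨x, hx⟩ ⟨x', hx'⟩)
    (h1 : g (α x) = α x) (h2 : g (α x') = α x') :
    FixRel g ⟨α x, h1⟩ ⟨α x', h2⟩ := by
  obtain ⟨p, hp⟩ := h
  refine ⟨p.map α.continuous, ?_⟩
  have heq : ((p.map f.continuous).cast hx.symm hx'.symm).map α.continuous
      = ((p.map α.continuous).map g.continuous).cast h1.symm h2.symm :=
    Path.ext (funext fun t => hα (p t))
  have := hp.map α
  rwa [heq] at this

/-- An equivariant homotopy from the identity to `r` shows that any fixed point `x` is in the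
same fixed point class as `r x`. -/
lemma FixRel.of_equivariant_homotopy {X : Type*} [TopologicalSpace X] (f : C(X, X))
    (r : X → X) (K : C(X × unitInterval, X))
    (hK0 : ∀ x, K (x, 0) = x) (hK1 : ∀ x, K (x, 1) = r x)
    (hKf : ∀ x t, K (f x, t) = f (K (x, t)))
    {x : X} (hx : f x = x) (hr : f (r x) = r x) :
    FixRel f ⟨x, hx⟩ ⟨r x, hr⟩ := by
  refine ⟨⟨⟨fun t => K (x, t), by fun_prop⟩, hK0 x, hK1 x⟩, ?_⟩
  set q : Path x (r x) := ⟨⟨fun t => K (x, t), by fun_prop⟩, hK0 x, hK1 x⟩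
  have heq : (q.map f.continuous).cast hx.symm hr.symm = q := by
    refine Path.ext (funext fun t => ?_)
    show f (K (x, t)) = K (x, t)
    rw [← hKf, hx]
  rw [heq]

/-- If `α : (X, f) → (Y, g)` admits a homotopy inverse `β` through morphisms of
endomorphisms (witnessed by the equivariant homotopies `K` and `K'`), then `α` maps fixed
points of `f` to fixed points of `g`, preserves the fixed point class relation, and the
induced map on fixed point classes `Fix^c(f) → Fix^c(g)`, `[x] ↦ [α x]`, is a bijection. -/
theorem fixedPointClasses_bijection {X Y : Type*} [TopologicalSpace X] [TopologicalSpace Y]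
    (f : C(X, X)) (g : C(Y, Y)) (α : C(X, Y)) (β : C(Y, X))
    (hα : ∀ x, α (f x) = g (α x)) (hβ : ∀ y, β (g y) = f (β y))
    (K : C(X × unitInterval, X))
    (hK0 : ∀ x, K (x, 0) = x) (hK1 : ∀ x, K (x, 1) = β (α x))
    (hKf : ∀ x t, K (f x, t) = f (K (x, t)))
    (K' : C(Y × unitInterval, Y))
    (hK'0 : ∀ y, K' (y, 0) = y) (hK'1 : ∀ y, K' (y, 1) = α (β y))
    (hK'g : ∀ y t, K' (g y, t) = g (K' (y, t))) :
    (∀ x : X, f x = x → g (α x) = α x) ∧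
    (∀ (x x' : X) (hx : f x = x) (hx' : f x' = x'),
        FixRel f ⟨x, hx⟩ ⟨x', hx'⟩ →
        ∀ (h1 : g (α x) = α x) (h2 : g (α x') = α x'),
          FixRel g ⟨α x, h1⟩ ⟨α x', h2⟩) ∧
    (∀ F : Quot (FixRel f) → Quot (FixRel g),
        (∀ (a : {x : X // f x = x}) (ha : g (α a.1) = α a.1),
            F (Quot.mk _ a) = Quot.mk _ ⟨α a.1, ha⟩) →
        Function.Bijective F) := by
  have hαfix : ∀ x : X, f x = x → g (α x) = α x := fun x hx => by rw [← hα, hx]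
  have hβfix : ∀ y : Y, g y = y → f (β y) = β y := fun y hy => by rw [← hβ, hy]
  refine ⟨hαfix, fun x x' hx hx' h h1 h2 => FixRel.map_aux f g α hα hx hx' h h1 h2, ?_⟩
  intro F hF
  let G : Quot (FixRel g) → Quot (FixRel f) :=
    Quot.lift (fun b => Quot.mk (FixRel f) ⟨β b.1, hβfix b.1 b.2⟩)
      (fun a b hab =>
        Quot.sound (FixRel.map_aux g f β hβ a.2 b.2 hab
          (hβfix a.1 a.2) (hβfix b.1 b.2)))
  have hleft : ∀ q, G (F q) = q := by
    intro q
    induction q using Quot.ind with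
    | mk a =>
      rw [hF a (hαfix a.1 a.2)]
      show Quot.mk (FixRel f) ⟨β (α a.1), _⟩ = Quot.mk (FixRel f) a
      refine (Quot.sound ?_).symm
      exact FixRel.of_equivariant_homotopy f (fun x => β (α x)) K hK0 hK1 hKf a.2
        (hβfix (α a.1) (hαfix a.1 a.2))
  have hright : ∀ q, F (G q) = q := by
    intro q
    induction q using Quot.ind with
    | mk b =>
      show F (Quot.mk (FixRel f) ⟨β b.1, hβfix b.1 b.2⟩) = Quot.mk (FixRel g) b
      rw [hF ⟨β b.1, hβfix b.1 b.2⟩ (hαfix (β b.1) (hβfix b.1 b.2))]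
      refine (Quot.sound ?_).symm
      exact FixRel.of_equivariant_homotopy g (fun y => α (β y)) K' hK'0 hK'1 hK'g b.2
        (hαfix (β b.1) (hβfix b.1 b.2))
  exact Function.bijective_iff_has_inverse.mpr ⟨G, hleft, hright⟩
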